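/- Assume exactness, and let the SHB iterates be started from x0, x1 ∈ ℝ^d with x0 − x1 ∈ Range(Aᵀ). If ω = 1/λmax and β = (1 − sqrt(0.99 λmin⁺ / λmax))², then there exists a constant C > 0 such that for all k ≥ 0, ‖E[x_k − x*]‖² ≤ (1 − sqrt(0.99 λmin⁺ / λmax))^{2k} C, where x* is the orthogonal projection of x0 onto {x : A x = b}; hence ‖E[x_k − x*]‖² falls below ε after O(sqrt(λmax/λmin⁺) log(1/ε)) iterations. -/

import Mathlib

open Matrix MeasureTheory ProbabilityTheory

/-- Matrices over measurable entries carry the product σ-algebra. -/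
local instance {m n : ℕ} : MeasurableSpace (Matrix (Fin m) (Fin n) ℝ) :=
  MeasurableSpace.pi

lemma dot_self_nonneg {d : ℕ} (v : Fin d → ℝ) : 0 ≤ v ⬝ᵥ v :=
  Finset.sum_nonneg fun i _ => mul_self_nonneg (v i)

lemma dot_sub_smul_expand {d : ℕ} (u z : Fin d → ℝ) (t : ℝ) :
    (u - t • z) ⬝ᵥ (u - t • z) = u ⬝ᵥ u - 2*t*(u ⬝ᵥ z) + t^2*(z ⬝ᵥ z) := by
  simp only [sub_dotProduct, dotProduct_sub, smul_dotProduct,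
    dotProduct_smul, smul_eq_mul]
  rw [dotProduct_comm z u]
  ring

lemma psd_cs {d : ℕ} (N : Matrix (Fin d) (Fin d) ℝ)
    (hsym : ∀ u v : Fin d → ℝ, u ⬝ᵥ (N *ᵥ v) = v ⬝ᵥ (N *ᵥ u))
    (hpsd : ∀ v : Fin d → ℝ, 0 ≤ v ⬝ᵥ (N *ᵥ v)) (u v : Fin d → ℝ) :
    (u ⬝ᵥ (N *ᵥ v))^2 ≤ (u ⬝ᵥ (N *ᵥ u)) * (v ⬝ᵥ (N *ᵥ v)) := by
  have key : discrim (v ⬝ᵥ (N *ᵥ v)) (2 * (u ⬝ᵥ (N *ᵥ v))) (u ⬝ᵥ (N *ᵥ u)) ≤ 0 := by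
    apply discrim_le_zero
    intro t
    have h0 := hpsd (u + t • v)
    have hexp : (u + t • v) ⬝ᵥ (N *ᵥ (u + t • v))
        = u ⬝ᵥ (N *ᵥ u) + t * (u ⬝ᵥ (N *ᵥ v)) + t * (v ⬝ᵥ (N *ᵥ u))
          + t * t * (v ⬝ᵥ (N *ᵥ v)) := by
      simp [Matrix.mulVec_add, Matrix.mulVec_smul, add_dotProduct,
        dotProduct_add, smul_dotProduct, dotProduct_smul,
        smul_eq_mul]
      ring
    rw [hexp, hsym v u] at h0
    linarith [h0]
  rw [discrim] at key
  nlinarith [key]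

lemma lyap {d : ℕ} (N : Matrix (Fin d) (Fin d) ℝ)
    (hsym : ∀ u v : Fin d → ℝ, u ⬝ᵥ (N *ᵥ v) = v ⬝ᵥ (N *ᵥ u))
    (hpsd : ∀ v : Fin d → ℝ, 0 ≤ v ⬝ᵥ (N *ᵥ v))
    (ρ c : ℝ) (hρ : 0 < ρ) (hc0 : 0 ≤ c) (hcρ : c < 2*ρ)
    (e : ℕ → Fin d → ℝ)
    (hub : ∀ k, (e k) ⬝ᵥ (N *ᵥ (e k)) ≤ c * ((e k) ⬝ᵥ (e k)))
    (hrec : ∀ k, 1 ≤ k → e (k+1) = N *ᵥ (e k) - (ρ^2) • e (k-1)) :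
    ∃ C, 0 < C ∧ ∀ k, (e k) ⬝ᵥ (e k) ≤ ρ^(2*k) * C := by
  set V : ℕ → ℝ := fun k =>
    e k ⬝ᵥ e k - (e k) ⬝ᵥ (N *ᵥ e (k-1)) + ρ^2 * (e (k-1) ⬝ᵥ e (k-1)) with hV
  -- step 1
  have step1 : ∀ k, 1 ≤ k → V (k+1) = ρ^2 * V k := by
    intro k hk
    have hrk := hrec k hk
    have hk1 : k + 1 - 1 = k := rfl
    have hx : e k ⬝ᵥ (N *ᵥ e (k-1)) = (N *ᵥ e k) ⬝ᵥ e (k-1) := by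
      rw [hsym]; exact dotProduct_comm _ _
    simp only [hV, hk1, hrk]
    simp [sub_dotProduct, dotProduct_sub, smul_dotProduct,
      dotProduct_smul, smul_eq_mul]
    rw [hx]
    ring
  -- step 2
  have step2' : ∀ j : ℕ, V (j+1) = (ρ^2)^j * V 1 := by
    intro j
    induction j with
    | zero => simp
    | succ n ih =>
      rw [step1 (n+1) (by omega), ih, pow_succ]
      ring
  have step2 : ∀ k, 1 ≤ k → V k = (ρ^2)^(k-1) * V 1 := by
    intro k hk
    have : k = (k-1) + 1 := by omega
    rw [this, step2']
    simp
  -- step 3 : lower bound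
  have step3 : ∀ k, 1 ≤ k → (2*ρ - c) * (e k ⬝ᵥ e k) ≤ 2*ρ * V k := by
    intro k hk
    set a := e k ⬝ᵥ e k
    set bb := e (k-1) ⬝ᵥ e (k-1)
    set X := e k ⬝ᵥ (N *ᵥ e (k-1)) with hX
    have ha : 0 ≤ a := dot_self_nonneg _
    have hbb : 0 ≤ bb := dot_self_nonneg _
    have hcs : X^2 ≤ (c*a) * (c*bb) := by
      have h1 := psd_cs N hsym hpsd (e k) (e (k-1))
      have h2 := hub k
      have h3 := hub (k-1)
      have h4 := hpsd (e k)
      have h5 := hpsd (e (k-1))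
      nlinarith [h1, h2, h3]
    have h1 : 2*ρ*X ≤ c*(a + ρ^2*bb) := by
      rcases le_or_gt X 0 with hx0 | hx0
      · have : 0 ≤ c*(a + ρ^2*bb) := by positivity
        nlinarith
      · have hA : (2*ρ*X)^2 ≤ 4*ρ^2*(c*a*(c*bb)) := by
          have h := mul_le_mul_of_nonneg_left hcs (by positivity : (0:ℝ) ≤ 4*ρ^2)
          calc (2*ρ*X)^2 = 4*ρ^2*X^2 := by ring
            _ ≤ 4*ρ^2*(c*a*(c*bb)) := h
        have hB : 4*ρ^2*(c*a*(c*bb)) ≤ (c*(a + ρ^2*bb))^2 := by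
          nlinarith [mul_nonneg (mul_nonneg hc0 hc0) (sq_nonneg (a - ρ^2*bb))]
        have hsq : (2*ρ*X)^2 ≤ (c*(a + ρ^2*bb))^2 := hA.trans hB
        have := le_of_pow_le_pow_left₀ (n := 2) (by norm_num) (by positivity) hsq
        linarith
    have hVk : V k = a - X + ρ^2 * bb := rfl
    nlinarith [h1, hVk, mul_nonneg (mul_nonneg (mul_nonneg hρ.le hρ.le) hbb)
      (by linarith : (0:ℝ) ≤ 2*ρ - c)]
  -- combine
  have hρ2 : (0:ℝ) < 2*ρ - c := by linarith
  have hV1nn : 0 ≤ V 1 := by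
    have := step3 1 le_rfl
    nlinarith [dot_self_nonneg (e 1)]
  set C0 : ℝ := 2 * V 1 / (ρ * (2*ρ - c)) with hC0
  have hC0nn : 0 ≤ C0 := by positivity
  have hCpos : (0:ℝ) < max (e 0 ⬝ᵥ e 0) C0 + 1 := by
    have := dot_self_nonneg (e 0)
    have := le_max_left (e 0 ⬝ᵥ e 0) C0
    linarith
  refine ⟨max (e 0 ⬝ᵥ e 0) C0 + 1, hCpos, ?_⟩
  intro k
  rcases Nat.eq_zero_or_pos k with hk | hk
  · subst hk
    simp only [Nat.mul_zero, pow_zero, one_mul]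
    have := le_max_left (e 0 ⬝ᵥ e 0) C0
    linarith
  · have hk' := step2 k hk
    have h3 := step3 k hk
    have hbound : e k ⬝ᵥ e k ≤ ρ^(2*k) * C0 := by
      have hkk : ρ^(2*k) = ρ^2 * (ρ^2)^(k-1) := by
        rw [← pow_mul, ← pow_add]
        congr 1
        omega
      have hEq : ρ^(2*k) * C0 = 2*ρ*((ρ^2)^(k-1) * V 1)/(2*ρ - c) := by
        rw [hkk, hC0]
        field_simp
      rw [hEq, ← hk', le_div_iff₀ hρ2]
      linarith [h3]
    have hmono : ρ^(2*k) * C0 ≤ ρ^(2*k) * (max (e 0 ⬝ᵥ e 0) C0 + 1) := by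
      apply mul_le_mul_of_nonneg_left _ (by positivity)
      have := le_max_right (e 0 ⬝ᵥ e 0) C0
      linarith
    linarith

lemma inner_eq_dot {d : ℕ} (a b : EuclideanSpace ℝ (Fin d)) :
    (inner ℝ a b : ℝ) = (fun i => a i) ⬝ᵥ (fun i => b i) := by
  simp [PiLp.inner_apply, RCLike.inner_apply, starRingEnd_apply, dotProduct]
  exact Finset.sum_congr rfl fun _ _ => mul_comm _ _

lemma mem_range_of_perp {m d : ℕ} (A : Matrix (Fin m) (Fin d) ℝ) (v : Fin d → ℝ)
    (hperp : ∀ z : Fin d → ℝ, A *ᵥ z = 0 → v ⬝ᵥ z = 0) : ∃ u, v = Aᵀ *ᵥ u := by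
  classical
  set eqv := WithLp.linearEquiv 2 ℝ (Fin d → ℝ) with heqv
  set K : Submodule ℝ (EuclideanSpace ℝ (Fin d)) :=
    LinearMap.range (eqv.symm.toLinearMap.comp (Matrix.mulVecLin Aᵀ)) with hK
  have hmem : eqv.symm v ∈ Kᗮᗮ := by
    intro z hz
    -- z ∈ Kᗮ
    have hAz : A *ᵥ (eqv z) = 0 := by
      funext q
      have h1 : Aᵀ *ᵥ (Pi.single q 1) ∈ LinearMap.range (Matrix.mulVecLin Aᵀ) :=
        ⟨Pi.single q 1, by simp [Matrix.mulVecLin]⟩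
      have h2 : eqv.symm (Aᵀ *ᵥ (Pi.single q 1)) ∈ K :=
        ⟨Pi.single q 1, by simp [Matrix.mulVecLin]⟩
      have h3 := hz _ h2
      rw [inner_eq_dot] at h3
      have h4 : (Aᵀ *ᵥ (Pi.single q 1)) ⬝ᵥ (eqv z) = 0 := h3
      rw [dotProduct_comm, Matrix.dotProduct_mulVec, Matrix.vecMul_transpose] at h4
      simpa using h4
    have h5 := hperp (eqv z) hAz
    rw [real_inner_comm, inner_eq_dot]
    exact h5
  rw [Submodule.orthogonal_orthogonal] at hmem
  obtain ⟨u, hu⟩ := hmem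
  refine ⟨u, ?_⟩
  simp only [LinearMap.comp_apply, LinearEquiv.coe_coe] at hu
  have h6 := eqv.symm.injective hu
  rw [← h6, Matrix.mulVecLin_apply]


lemma shb_expectation {m d : ℕ} {Ω : Type*} [MeasurableSpace Ω] (μ : Measure Ω)
    [IsProbabilityMeasure μ]
    (A : Matrix (Fin m) (Fin d) ℝ) (b : Fin m → ℝ)
    (H : ℕ → Ω → Matrix (Fin m) (Fin m) ℝ)
    (hHmeas : ∀ k, Measurable (H k))
    (hHiid : iIndepFun H μ)
    (hHident : ∀ k, μ.map (H k) = μ.map (H 0))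
    (hHint : ∀ k i j, Integrable (fun s => H k s i j) μ)
    (W : Matrix (Fin m) (Fin m) ℝ) (hW : ∀ i j, W i j = ∫ s, H 0 s i j ∂μ)
    (ω β : ℝ) (x0 x1 : Fin d → ℝ)
    (x : ℕ → Ω → (Fin d → ℝ)) (hx0 : ∀ s, x 0 s = x0) (hx1 : ∀ s, x 1 s = x1)
    (hrec : ∀ k, 1 ≤ k → ∀ s,
      x (k + 1) s = x k s - ω • (Aᵀ *ᵥ (H k s *ᵥ (A *ᵥ x k s - b)))
        + β • (x k s - x (k - 1) s))
    (xstar : Fin d → ℝ) (hxstar : A *ᵥ xstar = b) :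
    (∀ k i, Integrable (fun s => x k s i) μ) ∧
    (∀ k, 1 ≤ k →
      (fun i => ∫ s, (x (k+1) s i - xstar i) ∂μ)
        = (fun i => ∫ s, (x k s i - xstar i) ∂μ)
          - ω • ((Aᵀ * W * A) *ᵥ (fun i => ∫ s, (x k s i - xstar i) ∂μ))
          + β • ((fun i => ∫ s, (x k s i - xstar i) ∂μ)
              - (fun i => ∫ s, (x (k-1) s i - xstar i) ∂μ))) := by
  classical
  set G : (Fin d → ℝ) × (Fin d → ℝ) × Matrix (Fin m) (Fin m) ℝ → (Fin d → ℝ) :=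
    fun p => p.1 - ω • (Aᵀ *ᵥ (p.2.2 *ᵥ (A *ᵥ p.1 - b))) + β • (p.1 - p.2.1) with hGdef
  have hG : Measurable G := by
    apply measurable_pi_lambda
    intro i
    simp only [hGdef, Pi.add_apply, Pi.sub_apply, Pi.smul_apply, smul_eq_mul,
      Matrix.mulVec, dotProduct]
    have hv : ∀ j, Measurable fun p : (Fin d → ℝ) × (Fin d → ℝ) × Matrix (Fin m) (Fin m) ℝ => p.1 j :=
      fun j => (measurable_pi_apply j).comp measurable_fst
    have hw : ∀ j, Measurable fun p : (Fin d → ℝ) × (Fin d → ℝ) × Matrix (Fin m) (Fin m) ℝ => p.2.1 j :=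
      fun j => (measurable_pi_apply j).comp (measurable_fst.comp measurable_snd)
    have hM : ∀ a c, Measurable fun p : (Fin d → ℝ) × (Fin d → ℝ) × Matrix (Fin m) (Fin m) ℝ => p.2.2 a c :=
      fun a c => (measurable_pi_apply c).comp ((measurable_pi_apply a).comp (measurable_snd.comp measurable_snd))
    refine Measurable.add (Measurable.sub (hv i) (Measurable.const_mul ?_ ω)) (Measurable.const_mul ((hv i).sub (hw i)) β)
    refine Finset.measurable_sum _ fun a _ => Measurable.const_mul ?_ _
    refine Finset.measurable_sum _ fun c _ => Measurable.mul (hM a c) ?_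
    exact (Finset.measurable_sum _ fun j _ => Measurable.const_mul (hv j) _).sub measurable_const
  have hstep : ∀ k, 1 ≤ k → ∀ s, x (k+1) s = G (x k s, x (k-1) s, H k s) :=
    fun k hk s => hrec k hk s
  have hME : ∀ a c : Fin m, Measurable (fun M : Matrix (Fin m) (Fin m) ℝ => M a c) := by
    intro a c
    have h1 : Measurable (fun M : Matrix (Fin m) (Fin m) ℝ => M a) := measurable_pi_apply a
    exact (measurable_pi_apply c).comp h1
  have hψE : ∀ c : Fin m, Measurable (fun v : Fin d → ℝ => (∑ j, A c j * v j) - b c) :=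
    fun c => (Finset.measurable_sum _ fun j _ =>
      (measurable_pi_apply j).const_mul _).sub measurable_const
  -- representation of x k as a measurable function of H_1, ..., H_{k-1}
  have rep : ∀ k, ∃ φ : (((Finset.Ico 1 k : Finset ℕ) : Type) → Matrix (Fin m) (Fin m) ℝ) → (Fin d → ℝ),
      Measurable φ ∧ ∀ s, x k s = φ (fun i => H (i : ℕ) s) := by
    have key : ∀ k, (∃ φ : (((Finset.Ico 1 k : Finset ℕ) : Type) → Matrix (Fin m) (Fin m) ℝ) → (Fin d → ℝ),
        Measurable φ ∧ ∀ s, x k s = φ (fun i => H (i : ℕ) s)) ∧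
        (∃ φ : (((Finset.Ico 1 (k+1) : Finset ℕ) : Type) → Matrix (Fin m) (Fin m) ℝ) → (Fin d → ℝ),
        Measurable φ ∧ ∀ s, x (k+1) s = φ (fun i => H (i : ℕ) s)) := by
      intro k
      induction k with
      | zero =>
        exact ⟨⟨fun _ => x0, measurable_const, fun s => hx0 s⟩,
          ⟨fun _ => x1, measurable_const, fun s => hx1 s⟩⟩
      | succ n ih =>
        refine ⟨ih.2, ?_⟩
        obtain ⟨φ1, hφ1m, hφ1⟩ := ih.2
        obtain ⟨φ0, hφ0m, hφ0⟩ := ih.1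
        have hsub1 : ∀ i : ℕ, i ∈ Finset.Ico 1 (n+1) → i ∈ Finset.Ico 1 (n+2) := by
          intro i hi; simp only [Finset.mem_Ico] at *; omega
        have hsub0 : ∀ i : ℕ, i ∈ Finset.Ico 1 n → i ∈ Finset.Ico 1 (n+2) := by
          intro i hi; simp only [Finset.mem_Ico] at *; omega
        have hmemn : (n+1) ∈ Finset.Ico 1 (n+2) := by simp only [Finset.mem_Ico]; omega
        refine ⟨fun g => G (φ1 (fun i => g ⟨(i : ℕ), hsub1 _ i.2⟩),
            φ0 (fun i => g ⟨(i : ℕ), hsub0 _ i.2⟩), g ⟨n+1, hmemn⟩), ?_, ?_⟩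
        · apply hG.comp
          refine Measurable.prod ?_ (Measurable.prod ?_ ?_)
          · exact hφ1m.comp (measurable_pi_lambda _ fun i => measurable_pi_apply _)
          · exact hφ0m.comp (measurable_pi_lambda _ fun i => measurable_pi_apply _)
          · exact measurable_pi_apply _
        · intro s
          rw [hstep (n+1) (by omega) s]
          have h1 := hφ1 s
          have h0 := hφ0 s
          simp only [Nat.add_sub_cancel]
          rw [h1]
          try rw [h0]
    exact fun k => (key k).1
  -- independence of H k and x k
  have hindep : ∀ k, IndepFun (H k) (x k) μ := by
    intro k
    obtain ⟨φ, hφm, hφ⟩ := rep k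
    have hdisj : Disjoint ({k} : Finset ℕ) (Finset.Ico 1 k) := by
      simp only [Finset.disjoint_singleton_left, Finset.mem_Ico]
      omega
    have base := hHiid.indepFun_finset {k} (Finset.Ico 1 k) hdisj hHmeas
    have h := base.comp
      (φ := fun g : (({k} : Finset ℕ) : Type) → Matrix (Fin m) (Fin m) ℝ =>
        g ⟨k, Finset.mem_singleton_self k⟩)
      (ψ := φ) (measurable_pi_apply _ : Measurable fun g : (({k} : Finset ℕ) : Type) → Matrix (Fin m) (Fin m) ℝ =>
        g ⟨k, Finset.mem_singleton_self k⟩) hφm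
    have hx : (φ ∘ fun a (i : ((Finset.Ico 1 k : Finset ℕ) : Type)) => H (i : ℕ) a) = x k :=
      funext fun s => (hφ s).symm
    rw [← hx]
    exact h
  -- integrability of coordinates
  have hxint : ∀ k i, Integrable (fun s => x k s i) μ := by
    have key : ∀ k, (∀ i, Integrable (fun s => x k s i) μ) ∧
        (∀ i, Integrable (fun s => x (k+1) s i) μ) := by
      intro k
      induction k with
      | zero =>
        constructor
        · intro i; simp only [hx0]; exact integrable_const _
        · intro i; simp only [hx1]; exact integrable_const _
      | succ n ih =>
        refine ⟨ih.2, ?_⟩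
        intro i
        have hform : (fun s => x (n+2) s i) = fun s =>
            x (n+1) s i - ω * (∑ a, Aᵀ i a * ∑ c, H (n+1) s a c *
              ((∑ j, A c j * x (n+1) s j) - b c)) + β * (x (n+1) s i - x n s i) := by
          funext s
          rw [hstep (n+1) (by omega) s]
          simp only [hGdef, Nat.add_sub_cancel, Pi.add_apply, Pi.sub_apply, Pi.smul_apply,
            smul_eq_mul, Matrix.mulVec, dotProduct]
        rw [hform]
        have hprod : ∀ a c, Integrable (fun s => H (n+1) s a c *
            ((∑ j, A c j * x (n+1) s j) - b c)) μ := by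
          intro a c
          have hind := (hindep (n+1)).comp
            (φ := fun M : Matrix (Fin m) (Fin m) ℝ => M a c)
            (ψ := fun v : Fin d → ℝ => (∑ j, A c j * v j) - b c)
            (hME a c) (hψE c)
          have h2 : Integrable (fun s => (∑ j, A c j * x (n+1) s j) - b c) μ :=
            (integrable_finset_sum _ fun j _ => (ih.2 j).const_mul _).sub (integrable_const _)
          exact hind.integrable_mul (hHint (n+1) a c) h2
        refine Integrable.add (Integrable.sub (ih.2 i) ?_) (((ih.2 i).sub (ih.1 i)).const_mul β)
        exact (integrable_finset_sum _ fun a _ =>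
          (integrable_finset_sum _ fun c _ => hprod a c).const_mul _).const_mul ω
    exact fun k => (key k).1
  refine ⟨hxint, ?_⟩
  -- expectation of H entries
  have hHexp : ∀ k a c, ∫ s, H k s a c ∂μ = W a c := by
    intro k a c
    have hm : Measurable (fun M : Matrix (Fin m) (Fin m) ℝ => M a c) :=
      (measurable_pi_apply c).comp (measurable_pi_apply a)
    rw [hW]
    have h1 : ∫ s, H k s a c ∂μ = ∫ M, M a c ∂(μ.map (H k)) :=
      (integral_map (hHmeas k).aemeasurable hm.aestronglyMeasurable).symm
    rw [h1, hHident k, integral_map (hHmeas 0).aemeasurable hm.aestronglyMeasurable]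
  -- the recursion in expectation
  intro k hk
  set e : ℕ → Fin d → ℝ := fun k i => ∫ s, (x k s i - xstar i) ∂μ with he
  have hXe : ∀ k j, ∫ s, x k s j ∂μ = e k j + xstar j := by
    intro k j
    have : e k j = ∫ s, x k s j ∂μ - xstar j := by
      simp only [he]
      rw [integral_sub (hxint k j) (integrable_const _), integral_const]
      simp
    linarith
  -- integral of the v-coordinates
  have hvint : ∀ c, Integrable (fun s => (∑ j, A c j * x k s j) - b c) μ := fun c =>
    (integrable_finset_sum _ fun j _ => (hxint k j).const_mul _).sub (integrable_const _)
  have hvexp : ∀ c, ∫ s, ((∑ j, A c j * x k s j) - b c) ∂μ = (A *ᵥ e k) c := by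
    intro c
    have h1 : ∀ j : Fin d, ∫ s, A c j * x k s j ∂μ = A c j * (e k j + xstar j) := by
      intro j
      rw [integral_const_mul, hXe]
    rw [integral_sub (integrable_finset_sum _ fun j _ => (hxint k j).const_mul _)
      (integrable_const _), integral_finset_sum _ (fun j _ => (hxint k j).const_mul _)]
    simp only [h1, integral_const, measure_univ, ENNReal.toReal_one, probReal_univ, one_smul]
    have hb : b c = ∑ j, A c j * xstar j := by
      have := congrFun hxstar c
      simp only [Matrix.mulVec, dotProduct] at this
      exact this.symm
    simp only [Matrix.mulVec, dotProduct]
    rw [hb, ← Finset.sum_sub_distrib]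
    apply Finset.sum_congr rfl
    intro j _
    ring
  have hprodint : ∀ a c, Integrable (fun s => H k s a c *
      ((∑ j, A c j * x k s j) - b c)) μ := by
    intro a c
    have hind := (hindep k).comp
      (φ := fun M : Matrix (Fin m) (Fin m) ℝ => M a c)
      (ψ := fun v : Fin d → ℝ => (∑ j, A c j * v j) - b c)
      (hME a c) (hψE c)
    exact hind.integrable_mul (hHint k a c) (hvint c)
  have hprodexp : ∀ a c, ∫ s, H k s a c * ((∑ j, A c j * x k s j) - b c) ∂μ
      = W a c * (A *ᵥ e k) c := by
    intro a c
    have hind := (hindep k).comp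
      (φ := fun M : Matrix (Fin m) (Fin m) ℝ => M a c)
      (ψ := fun v : Fin d → ℝ => (∑ j, A c j * v j) - b c)
      (hME a c) (hψE c)
    have := hind.integral_mul_eq_mul_integral (hHint k a c).aestronglyMeasurable
      (hvint c).aestronglyMeasurable
    have h2 : (∫ s, H k s a c * ((∑ j, A c j * x k s j) - b c) ∂μ)
        = (∫ s, H k s a c ∂μ) * ∫ s, ((∑ j, A c j * x k s j) - b c) ∂μ := this
    rw [h2, hHexp k a c, hvexp c]
  -- main computation
  funext i
  have hform : ∀ s, x (k+1) s i - xstar i = (x k s i - xstar i)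
      - ω * (∑ a, Aᵀ i a * ∑ c, H k s a c * ((∑ j, A c j * x k s j) - b c))
      + β * ((x k s i - xstar i) - (x (k-1) s i - xstar i)) := by
    intro s
    rw [hrec k hk s]
    simp only [Pi.add_apply, Pi.sub_apply, Pi.smul_apply, smul_eq_mul,
      Matrix.mulVec, dotProduct]
    ring
  have hint1 : Integrable (fun s => x k s i - xstar i) μ := (hxint k i).sub (integrable_const _)
  have hint0 : Integrable (fun s => x (k-1) s i - xstar i) μ := (hxint (k-1) i).sub (integrable_const _)
  have hintT : Integrable (fun s => ∑ a, Aᵀ i a * ∑ c, H k s a c *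
      ((∑ j, A c j * x k s j) - b c)) μ :=
    integrable_finset_sum _ fun a _ =>
      (integrable_finset_sum _ fun c _ => hprodint a c).const_mul _
  calc ∫ s, (x (k+1) s i - xstar i) ∂μ
      = ∫ s, ((x k s i - xstar i)
          - ω * (∑ a, Aᵀ i a * ∑ c, H k s a c * ((∑ j, A c j * x k s j) - b c))
          + β * ((x k s i - xstar i) - (x (k-1) s i - xstar i))) ∂μ := by
        congr 1; funext s; exact hform s
    _ = e k i - ω * (∑ a, Aᵀ i a * ∑ c, W a c * (A *ᵥ e k) c)
          + β * (e k i - e (k-1) i) := by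
        have I1 : Integrable (fun s => (x k s i - xstar i)
            - ω * (∑ a, Aᵀ i a * ∑ c, H k s a c * ((∑ j, A c j * x k s j) - b c))) μ :=
          hint1.sub (hintT.const_mul ω)
        have I2 : Integrable (fun s => β * ((x k s i - xstar i)
            - (x (k-1) s i - xstar i))) μ := ((hint1.sub hint0).const_mul β)
        have I3 : Integrable (fun s => ω * (∑ a, Aᵀ i a * ∑ c, H k s a c *
            ((∑ j, A c j * x k s j) - b c))) μ := hintT.const_mul ω
        have I4 : Integrable (fun s => (x k s i - xstar i)
            - (x (k-1) s i - xstar i)) μ := hint1.sub hint0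
        rw [integral_add I1 I2, integral_sub hint1 I3, integral_const_mul,
          integral_const_mul, integral_sub hint1 hint0,
          integral_finset_sum _ (fun a _ => ((integrable_finset_sum _
            (fun c _ => hprodint a c)).const_mul _))]
        have hTa : ∀ a : Fin m, ∫ s, Aᵀ i a * ∑ c, H k s a c *
            ((∑ j, A c j * x k s j) - b c) ∂μ
            = Aᵀ i a * ∑ c, W a c * (A *ᵥ e k) c := by
          intro a
          rw [integral_const_mul, integral_finset_sum _ (fun c _ => hprodint a c)]
          congr 1
          apply Finset.sum_congr rfl
          intro c _
          exact hprodexp a c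
        simp only [hTa]
        rfl
    _ = (e k - ω • ((Aᵀ * W * A) *ᵥ e k) + β • (e k - e (k-1))) i := by
        simp only [Pi.add_apply, Pi.sub_apply, Pi.smul_apply, smul_eq_mul]
        rw [show (Aᵀ * W * A) *ᵥ e k = Aᵀ *ᵥ (W *ᵥ (A *ᵥ e k)) by
          rw [← Matrix.mulVec_mulVec, ← Matrix.mulVec_mulVec]]
        simp only [Matrix.mulVec, dotProduct]


set_option maxHeartbeats 1000000 in
/-- Accelerated L1 convergence of SHB with the tuned parameters
`ω = 1/λmax` and `β = (1 − sqrt(0.99 λmin⁺/λmax))²`: there exists `C > 0` such that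
for all `k ≥ 0`, `‖E[x_k − x*]‖² ≤ (1 − sqrt(0.99 λmin⁺/λmax))^(2k) C`, where `x*`
is the orthogonal projection of `x0` onto `{x : A x = b}`; hence `‖E[x_k − x*]‖²`
falls below `ε` after `O(sqrt(λmax/λmin⁺) log(1/ε))` iterations. -/
theorem shb_L1_accelerated_tuned {m d : ℕ}
    {Ω : Type*} [MeasurableSpace Ω] (μ : Measure Ω) [IsProbabilityMeasure μ]
    (A : Matrix (Fin m) (Fin d) ℝ) (b : Fin m → ℝ)
    -- the i.i.d. random matrices `H_k`, a.s. symmetric psd with `H A Aᵀ H = H`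
    (H : ℕ → Ω → Matrix (Fin m) (Fin m) ℝ)
    (hHmeas : ∀ k, Measurable (H k))
    (hHiid : iIndepFun H μ)
    (hHident : ∀ k, μ.map (H k) = μ.map (H 0))
    (hHas : ∀ k, ∀ᵐ s ∂μ, (H k s).PosSemidef ∧ H k s * (A * Aᵀ) * H k s = H k s)
    (hHint : ∀ k i j, Integrable (fun s => H k s i j) μ)
    -- `W = E[H_0]`
    (W : Matrix (Fin m) (Fin m) ℝ)
    (hW : ∀ i j, W i j = ∫ s, H 0 s i j ∂μ)
    -- the objective `f` and exactness
    (f : (Fin d → ℝ) → ℝ)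
    (hf : ∀ y, f y = (1 / 2) * ((A *ᵥ y - b) ⬝ᵥ (W *ᵥ (A *ᵥ y - b))))
    (hexact : {y : Fin d → ℝ | f y = 0} = {y : Fin d → ℝ | A *ᵥ y = b})
    -- `λmin⁺` and `λmax`: smallest nonzero / largest eigenvalue of `Aᵀ W A`
    (lmin lmax : ℝ) (hlmin_pos : 0 < lmin) (hlmax_pos : 0 < lmax) (hle : lmin ≤ lmax)
    (hlmin : ∀ v : Fin d → ℝ, (∃ u, v = Aᵀ *ᵥ u) →
      lmin * (v ⬝ᵥ v) ≤ v ⬝ᵥ ((Aᵀ * W * A) *ᵥ v))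
    (hlmax : ∀ v : Fin d → ℝ, v ⬝ᵥ ((Aᵀ * W * A) *ᵥ v) ≤ lmax * (v ⬝ᵥ v))
    -- tuned parameters
    (ω β : ℝ) (hω : ω = 1 / lmax)
    (hβ : β = (1 - Real.sqrt (0.99 * lmin / lmax)) ^ 2)
    -- the SHB iterates, started from deterministic `x0, x1` with `x0 − x1 ∈ Range Aᵀ`
    (x0 x1 : Fin d → ℝ) (hx01 : ∃ u, x0 - x1 = Aᵀ *ᵥ u)
    (x : ℕ → Ω → (Fin d → ℝ))
    (hx0 : ∀ s, x 0 s = x0) (hx1 : ∀ s, x 1 s = x1)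
    (hrec : ∀ k, 1 ≤ k → ∀ s,
      x (k + 1) s = x k s - ω • (Aᵀ *ᵥ (H k s *ᵥ (A *ᵥ x k s - b)))
        + β • (x k s - x (k - 1) s))
    -- `x*` is the orthogonal projection of `x0` onto `{x : A x = b}`
    (xstar : Fin d → ℝ) (hxstar : A *ᵥ xstar = b)
    (hproj : ∀ y : Fin d → ℝ, A *ᵥ y = b →
      (x0 - xstar) ⬝ᵥ (x0 - xstar) ≤ (x0 - y) ⬝ᵥ (x0 - y)) :
    ∃ C : ℝ, 0 < C ∧
      (∀ k : ℕ,
        (fun i => ∫ s, (x k s i - xstar i) ∂μ) ⬝ᵥ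
            (fun i => ∫ s, (x k s i - xstar i) ∂μ)
          ≤ (1 - Real.sqrt (0.99 * lmin / lmax)) ^ (2 * k) * C) ∧
      -- iteration complexity `O(sqrt(λmax/λmin⁺) log(1/ε))`:
      ∃ c : ℝ, 0 < c ∧ ∃ ε₀ : ℝ, 0 < ε₀ ∧
        ∀ ε : ℝ, 0 < ε → ε < ε₀ →
          ∀ k : ℕ, c * Real.sqrt (lmax / lmin) * Real.log (1 / ε) ≤ (k : ℝ) →
            (fun i => ∫ s, (x k s i - xstar i) ∂μ) ⬝ᵥ
                (fun i => ∫ s, (x k s i - xstar i) ∂μ) ≤ ε := by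
  classical
  obtain ⟨hxint, herec⟩ := shb_expectation μ A b H hHmeas hHiid hHident hHint W hW
    ω β x0 x1 x hx0 hx1 hrec xstar hxstar
  set σ := Real.sqrt (0.99 * lmin / lmax) with hσdef
  set ρ := 1 - σ with hρdef
  set e : ℕ → Fin d → ℝ := fun k i => ∫ s, (x k s i - xstar i) ∂μ with he
  -- basic numeric facts
  have hσ0 : 0 ≤ σ := Real.sqrt_nonneg _
  have hσ2 : σ^2 = 0.99 * lmin / lmax := Real.sq_sqrt (by positivity)
  have ht0 : 0 < lmin / lmax := by positivity
  have ht1 : lmin / lmax ≤ 1 := (div_le_one hlmax_pos).2 hle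
  have hσ99 : σ^2 ≤ 0.99 := by
    rw [hσ2, mul_div_assoc]
    nlinarith [ht1]
  have hσlt : σ < 1 := by nlinarith [hσ99, hσ0]
  have hρpos : 0 < ρ := by rw [hρdef]; linarith
  have hρlt : ρ < 1 := by rw [hρdef]; nlinarith [Real.sqrt_pos.2 (show 0 < 0.99*lmin/lmax by positivity)]
  have hβρ : β = ρ^2 := by rw [hβ]
  have hβ0 : 0 ≤ β := by rw [hβρ]; positivity
  -- symmetry of W
  have hWsymm : ∀ i j, W i j = W j i := by
    intro i j
    rw [hW, hW]
    apply integral_congr_ae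
    filter_upwards [hHas 0] with s hs
    have h2 := hs.1.isHermitian
    conv_lhs => rw [← h2]
    simp [Matrix.conjTranspose_apply]
  set M : Matrix (Fin d) (Fin d) ℝ := Aᵀ * W * A with hM
  have hMsymm : Mᵀ = M := by
    rw [hM]
    rw [Matrix.transpose_mul, Matrix.transpose_mul, Matrix.transpose_transpose]
    have : Wᵀ = W := by
      funext i j
      rw [Matrix.transpose_apply, hWsymm]
    rw [this, Matrix.mul_assoc]
  have hMdot : ∀ u v : Fin d → ℝ, u ⬝ᵥ (M *ᵥ v) = v ⬝ᵥ (M *ᵥ u) := by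
    intro u v
    rw [Matrix.dotProduct_mulVec, ← Matrix.mulVec_transpose, hMsymm]
    exact dotProduct_comm _ _
  set N : Matrix (Fin d) (Fin d) ℝ := (1+β) • (1 : Matrix (Fin d) (Fin d) ℝ) - ω • M with hN
  have hMv : ∀ v : Fin d → ℝ, M *ᵥ v = Aᵀ *ᵥ (W *ᵥ (A *ᵥ v)) := by
    intro v
    rw [hM, ← Matrix.mulVec_mulVec, ← Matrix.mulVec_mulVec]
  have hNv : ∀ v : Fin d → ℝ, N *ᵥ v = (1+β) • v - ω • (M *ᵥ v) := by
    intro v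
    rw [hN, Matrix.sub_mulVec, Matrix.smul_mulVec, Matrix.smul_mulVec,
      Matrix.one_mulVec]
  have hNdot : ∀ u v : Fin d → ℝ, u ⬝ᵥ (N *ᵥ v)
      = (1+β) * (u ⬝ᵥ v) - ω * (u ⬝ᵥ (M *ᵥ v)) := by
    intro u v
    rw [hNv]
    simp [dotProduct_sub, dotProduct_smul, smul_eq_mul]
  have hsym : ∀ u v : Fin d → ℝ, u ⬝ᵥ (N *ᵥ v) = v ⬝ᵥ (N *ᵥ u) := by
    intro u v
    rw [hNdot, hNdot, hMdot, dotProduct_comm]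
  have hω0 : 0 ≤ ω := by rw [hω]; positivity
  have hpsd : ∀ v : Fin d → ℝ, 0 ≤ v ⬝ᵥ (N *ᵥ v) := by
    intro v
    rw [hNdot]
    have h1 : ω * (v ⬝ᵥ (M *ᵥ v)) ≤ ω * (lmax * (v ⬝ᵥ v)) :=
      mul_le_mul_of_nonneg_left (hlmax v) hω0
    have h2 : ω * (lmax * (v ⬝ᵥ v)) = v ⬝ᵥ v := by
      rw [hω]; field_simp
    nlinarith [dot_self_nonneg v, h1, h2, hβ0]
  -- the error sequence lies in the row space
  have he0 : e 0 = x0 - xstar := by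
    funext i
    simp only [he, hx0]
    rw [integral_const]
    simp
  have he1 : e 1 = x1 - xstar := by
    funext i
    simp only [he, hx1]
    rw [integral_const]
    simp
  have he0range : ∃ u, e 0 = Aᵀ *ᵥ u := by
    rw [he0]
    apply mem_range_of_perp
    intro z hz
    have hkey : ∀ t : ℝ, 2 * t * ((x0 - xstar) ⬝ᵥ z) ≤ t^2 * (z ⬝ᵥ z) := by
      intro t
      have hAy : A *ᵥ (xstar + t • z) = b := by
        rw [Matrix.mulVec_add, Matrix.mulVec_smul, hz, smul_zero, add_zero, hxstar]
      have h := hproj (xstar + t • z) hAy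
      have hrw : x0 - (xstar + t • z) = (x0 - xstar) - t • z := by
        funext i; simp only [Pi.sub_apply, Pi.add_apply, Pi.smul_apply, smul_eq_mul]; ring
      rw [hrw] at h
      rw [dot_sub_smul_expand (x0 - xstar) z t] at h
      linarith
    by_contra hc
    set cc := (x0 - xstar) ⬝ᵥ z with hcc
    set n := z ⬝ᵥ z with hn
    have hn0 : 0 ≤ n := dot_self_nonneg z
    have h := hkey (cc / (n+1))
    have hccne : cc ≠ 0 := hc
    have hn1 : (0:ℝ) < n + 1 := by linarith
    rw [div_pow] at h
    have hne : (n+1) ≠ 0 := ne_of_gt hn1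
    have h2 : 2 * (cc / (n+1)) * cc * (n+1)^2 ≤ cc^2 / (n+1)^2 * n * (n+1)^2 :=
      mul_le_mul_of_nonneg_right h (by positivity)
    have hL : 2 * (cc / (n+1)) * cc * (n+1)^2 = 2 * cc^2 * (n+1) := by
      field_simp
    have hR : cc^2 / (n+1)^2 * n * (n+1)^2 = cc^2 * n := by
      field_simp
    rw [hL, hR] at h2
    have hcc2 : 0 < cc^2 := by positivity
    nlinarith [h2, mul_nonneg (sq_nonneg cc) hn0, hcc2]
  have hrange : ∀ k, ∃ u, e k = Aᵀ *ᵥ u := by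
    have he1range : ∃ u, e 1 = Aᵀ *ᵥ u := by
      obtain ⟨u0, hu0⟩ := he0range
      obtain ⟨u01, hu01⟩ := hx01
      refine ⟨u0 - u01, ?_⟩
      rw [Matrix.mulVec_sub, ← hu0, ← hu01, he0, he1]
      funext i
      simp only [Pi.sub_apply]
      ring
    have key : ∀ k, (∃ u, e k = Aᵀ *ᵥ u) ∧ (∃ u, e (k+1) = Aᵀ *ᵥ u) := by
      intro k
      induction k with
      | zero => exact ⟨he0range, he1range⟩
      | succ n ih =>
        refine ⟨ih.2, ?_⟩
        obtain ⟨u1, hu1⟩ := ih.2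
        obtain ⟨u0, hu0⟩ := ih.1
        have hr' : e (n+2) = e (n+1) - ω • (M *ᵥ e (n+1)) + β • (e (n+1) - e n) :=
          herec (n+1) (by omega)
        refine ⟨u1 - ω • (W *ᵥ (A *ᵥ e (n+1))) + β • (u1 - u0), ?_⟩
        rw [hr', hMv, Matrix.mulVec_add, Matrix.mulVec_sub, Matrix.mulVec_smul,
          Matrix.mulVec_smul, Matrix.mulVec_sub, ← hu1, ← hu0]
    exact fun k => (key k).1
  -- upper bound constant
  set c : ℝ := 2*ρ - 0.01 * (lmin/lmax) with hcdef
  have hcρ : c < 2*ρ := by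
    rw [hcdef]; nlinarith [ht0]
  have hc0 : 0 ≤ c := by
    rw [hcdef, hρdef]
    nlinarith [sq_nonneg (σ - 0.99499), hσ2, ht0, ht1, hσ0]
  have hub : ∀ k, (e k) ⬝ᵥ (N *ᵥ (e k)) ≤ c * ((e k) ⬝ᵥ (e k)) := by
    intro k
    rw [hNdot]
    have h1 := hlmin (e k) (hrange k)
    have h2 : ω * (e k ⬝ᵥ (M *ᵥ e k)) ≥ ω * (lmin * (e k ⬝ᵥ e k)) :=
      mul_le_mul_of_nonneg_left h1 hω0
    have h3 : ω * (lmin * (e k ⬝ᵥ e k)) = (lmin/lmax) * (e k ⬝ᵥ e k) := by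
      rw [hω]; field_simp; try ring
    have h4 : 1 + β = 2*ρ + 0.99 * (lmin/lmax) := by
      rw [hβρ, hρdef]
      have : σ^2 = 0.99 * (lmin/lmax) := by rw [hσ2]; try ring
      nlinarith [this]
    rw [hcdef]
    nlinarith [dot_self_nonneg (e k), h2, h3, h4]
  -- recursion in the required form
  have hrec' : ∀ k, 1 ≤ k → e (k+1) = N *ᵥ (e k) - (ρ^2) • e (k-1) := by
    intro k hk
    have hr' : e (k+1) = e k - ω • (M *ᵥ e k) + β • (e k - e (k-1)) := herec k hk
    rw [hr', hNv, ← hβρ]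
    funext i
    simp only [Pi.sub_apply, Pi.add_apply, Pi.smul_apply, smul_eq_mul]
    ring
  obtain ⟨C, hCpos, hCbound⟩ := lyap N hsym hpsd ρ c hρpos hc0 hcρ e hub hrec'
  refine ⟨C, hCpos, fun k => hCbound k, ?_⟩
  -- complexity part
  refine ⟨3, by norm_num, min 1 (1/C), by positivity, ?_⟩
  intro ε hε hεlt k hk
  have hε1 : ε < 1 := lt_of_lt_of_le hεlt (min_le_left _ _)
  have hεC : ε < 1/C := lt_of_lt_of_le hεlt (min_le_right _ _)
  set L := Real.log (1/ε) with hL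
  have hLpos : 0 < L := Real.log_pos (by rw [lt_div_iff₀ hε]; linarith)
  have hlogC : Real.log C ≤ L := by
    rw [hL]
    apply Real.log_le_log hCpos
    rw [le_div_iff₀ hε]
    calc C * ε ≤ C * (1/C) := mul_le_mul_of_nonneg_left hεC.le hCpos.le
      _ = 1 := by field_simp
  -- √(lmax/lmin) * σ = √0.99
  have hsqrt99 : Real.sqrt (lmax/lmin) * σ = Real.sqrt 0.99 := by
    rw [hσdef, ← Real.sqrt_mul (by positivity)]
    congr 1
    field_simp
  have h99 : (0.9:ℝ) ≤ Real.sqrt 0.99 := by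
    rw [show (0.9:ℝ) = Real.sqrt (0.81) by rw [show (0.81:ℝ) = 0.9^2 by norm_num, Real.sqrt_sq (by norm_num)]]
    exact Real.sqrt_le_sqrt (by norm_num)
  have hσpos : 0 < σ := Real.sqrt_pos.2 (by positivity)
  -- k σ is big
  have hkσ : 2 * L ≤ 2 * (k:ℝ) * σ := by
    have h1 : 3 * Real.sqrt (lmax/lmin) * L ≤ (k:ℝ) := hk
    have h2 : 3 * Real.sqrt (lmax/lmin) * L * σ ≤ (k:ℝ) * σ :=
      mul_le_mul_of_nonneg_right h1 hσ0
    have h3 : 3 * Real.sqrt (lmax/lmin) * L * σ = 3 * Real.sqrt 0.99 * L := by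
      rw [← hsqrt99]; ring
    nlinarith [h2, h3, h99, hLpos]
  -- log inequality
  have hlogρ : σ ≤ -Real.log ρ := by
    have := Real.log_le_sub_one_of_pos hρpos
    rw [hρdef] at this ⊢
    linarith
  have hmain : (2*k:ℝ) * Real.log ρ + Real.log C ≤ Real.log ε := by
    have h1 : (2*k:ℝ) * (-Real.log ρ) ≥ (2*k:ℝ) * σ := by
      apply mul_le_mul_of_nonneg_left hlogρ (by positivity)
    have h2 : Real.log ε = -L := by
      rw [hL, one_div, Real.log_inv]; ring
    rw [h2]
    nlinarith [hkσ, h1, hlogC]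
  -- conclude
  have hfin : ρ^(2*k) * C ≤ ε := by
    have hlhs : 0 < ρ^(2*k) * C := by positivity
    rw [← Real.log_le_log_iff hlhs hε, Real.log_mul (by positivity) (ne_of_gt hCpos),
      Real.log_pow]
    push_cast
    linarith [hmain]
  exact le_trans (hCbound k) hfin
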